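/- Let c be a point of the Euclidean plane, r_c > 0, l a point with dist(c, l) = r_c, p = 2·c − l, d ≥ 0, and l' = l + (d / r_c)·(l − c). Let m be the midpoint of p and l' and ρ' = r_c + d/2. Then (i) dist(m, p) = dist(m, l') = ρ'; (ii) the closed disc of center c and radius r_c is contained in the closed disc of center m and radius ρ'; and (iii) every closed disc containing both p and l' has radius at least ρ'. Hence the closed disc of center m and radius ρ' is a smallest enclosing disc of any set of points containing p and l' and contained in the original disc union {l'}. -/

import Mathlib

open Metric

theorem new_sec_after_expansion
    (c l : EuclideanSpace ℝ (Fin 2)) (r_c : ℝ) (hrc : 0 < r_c)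
    (hl : dist c l = r_c)
    (p : EuclideanSpace ℝ (Fin 2)) (hpdef : p = (2 : ℝ) • c - l)
    (d : ℝ) (hd : 0 ≤ d)
    (l' : EuclideanSpace ℝ (Fin 2)) (hl' : l' = l + (d / r_c) • (l - c))
    (m : EuclideanSpace ℝ (Fin 2)) (hm : m = midpoint ℝ p l')
    (ρ' : ℝ) (hρ' : ρ' = r_c + d / 2) :
    (dist m p = ρ' ∧ dist m l' = ρ') ∧
    Metric.closedBall c r_c ⊆ Metric.closedBall m ρ' ∧
    (∀ (c'' : EuclideanSpace ℝ (Fin 2)) (ρ'' : ℝ),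
      p ∈ Metric.closedBall c'' ρ'' → l' ∈ Metric.closedBall c'' ρ'' →
      ρ' ≤ ρ'') ∧
    (∀ S : Set (EuclideanSpace ℝ (Fin 2)), p ∈ S → l' ∈ S →
      S ⊆ Metric.closedBall c r_c ∪ {l'} →
      S ⊆ Metric.closedBall m ρ' ∧
      ∀ (c'' : EuclideanSpace ℝ (Fin 2)) (ρ'' : ℝ),
        S ⊆ Metric.closedBall c'' ρ'' → ρ' ≤ ρ'') := by
  have hlc : ‖l - c‖ = r_c := by
    rw [← hl, dist_eq_norm, ← norm_neg]; congr 1; abel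
  have hpl' : dist p l' = 2 * ρ' := by
    rw [dist_eq_norm]
    have : p - l' = -((2 + d / r_c) • (l - c)) := by
      rw [hpdef, hl']; module
    rw [this, norm_neg, norm_smul, hlc, Real.norm_eq_abs,
      abs_of_nonneg (by positivity)]
    field_simp [hρ']
    rw [hρ']; ring
  have hmp : dist m p = ρ' := by
    rw [hm, dist_comm, dist_left_midpoint, hpl', Real.norm_two]
    ring
  have hml' : dist m l' = ρ' := by
    rw [hm, dist_midpoint_right, hpl', Real.norm_two]
    ring
  have hmc : dist m c = d / 2 := by
    rw [dist_eq_norm]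
    have : m - c = (d / (2 * r_c)) • (l - c) := by
      rw [hm, hpdef, hl', midpoint_eq_smul_add]; match_scalars <;>
        simp only [invOf_eq_inv] <;> field_simp <;> ring
    rw [this, norm_smul, hlc, Real.norm_eq_abs, abs_of_nonneg (by positivity)]
    field_simp
  have hsub : Metric.closedBall c r_c ⊆ Metric.closedBall m ρ' := by
    intro x hx
    simp only [mem_closedBall] at hx ⊢
    calc dist x m ≤ dist x c + dist c m := dist_triangle _ _ _
      _ ≤ r_c + d / 2 := by rw [dist_comm c m, hmc]; linarith
      _ = ρ' := hρ'.symm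
  have hlower : ∀ (c'' : EuclideanSpace ℝ (Fin 2)) (ρ'' : ℝ),
      p ∈ Metric.closedBall c'' ρ'' → l' ∈ Metric.closedBall c'' ρ'' →
      ρ' ≤ ρ'' := by
    intro c'' ρ'' hp hl'
    simp only [mem_closedBall] at hp hl'
    have := dist_triangle p c'' l'
    rw [dist_comm] at hp hl'
    rw [dist_comm p c''] at this
    linarith [hpl']
  refine ⟨⟨hmp, hml'⟩, hsub, hlower, ?_⟩
  intro S hpS hl'S hS
  constructor
  · intro x hx
    rcases hS hx with h | h
    · exact hsub h
    · simp only [Set.mem_singleton_iff] at h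
      subst h
      simpa [mem_closedBall, dist_comm] using hml'.le
  · intro c'' ρ'' hSsub
    exact hlower c'' ρ'' (hSsub hpS) (hSsub hl'S)
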